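/- Let $V$ be $C^1$ with $V' < 0$, $0 < E < V(0)$, $N = V^{-1}(E) > 1$, and $u$, $\gamma$ as above. Then $e^{-2V(0)} e^{2\int_0^N \gamma(y)dy} \le u(N)^2 + u'(N)^2 \le (N^2+1) e^{2\int_0^N \gamma(y)dy}$. -/

import Mathlib

open Set intervalIntegral MeasureTheory

theorem stmt_16 (V u u' : ℝ → ℝ) (E N : ℝ)
    (hV : ContDiffOn ℝ 1 V (Set.Ici 0))
    (hV' : ∀ x ≥ (0 : ℝ), derivWithin V (Set.Ici 0) x < 0)
    (hE : 0 < E ∧ E < V 0)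
    (hN : 1 < N) (hVN : V N = E)
    (hu : ∀ x ≥ (0 : ℝ), HasDerivAt u (u' x) x)
    (hu' : ∀ x ≥ (0 : ℝ), HasDerivAt u' ((V x - E) * u x) x)
    (hu0 : u 0 = 0) (hu'0 : u' 0 = 1) :
    Real.exp (-2 * V 0) * Real.exp (2 * ∫ y in (0 : ℝ)..N, Real.sqrt (V y - E))
        ≤ u N ^ 2 + u' N ^ 2 ∧
    u N ^ 2 + u' N ^ 2
        ≤ (N ^ 2 + 1) * Real.exp (2 * ∫ y in (0 : ℝ)..N, Real.sqrt (V y - E)) := by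
  obtain ⟨hE0, hEV0⟩ := hE
  have hN0 : (0:ℝ) < N := lt_trans one_pos hN
  have hVcont : ContinuousOn V (Set.Ici 0) := hV.continuousOn
  -- V is strictly decreasing on [0, ∞)
  have hVanti : StrictAntiOn V (Set.Ici 0) := by
    apply strictAntiOn_of_deriv_neg (convex_Ici 0) hVcont
    intro x hx
    rw [interior_Ici] at hx
    rw [← derivWithin_of_mem_nhds (Ici_mem_nhds hx)]
    exact hV' x (le_of_lt hx)
  have hVleV0 : ∀ x ∈ Icc (0:ℝ) N, V x ≤ V 0 := by
    intro x hx
    rcases eq_or_lt_of_le hx.1 with h | h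
    · rw [← h]
    · exact le_of_lt (hVanti (Set.mem_Ici.mpr (le_refl (0:ℝ))) (le_of_lt h) h)
  have hEleV : ∀ x ∈ Icc (0:ℝ) N, E ≤ V x := by
    intro x hx
    rcases eq_or_lt_of_le hx.2 with h | h
    · rw [h, hVN]
    · rw [← hVN]; exact le_of_lt (hVanti hx.1 (le_trans hx.1 (le_of_lt h)) h)
  have hEltV : ∀ x ∈ Ico (0:ℝ) N, E < V x := by
    intro x hx
    rw [← hVN]; exact hVanti hx.1 (le_trans hx.1 (le_of_lt hx.2)) hx.2
  -- the clamped version of sqrt (V x - E)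
  set c : ℝ → ℝ := fun x => max 0 (min x N) with hcdef
  have hc_mem : ∀ x, c x ∈ Icc (0:ℝ) N := by
    intro x
    constructor
    · exact le_max_left _ _
    · exact max_le (le_of_lt hN0) (min_le_right _ _)
  have hc_id : ∀ x ∈ Icc (0:ℝ) N, c x = x := by
    intro x hx
    simp only [hcdef]
    rw [min_eq_left hx.2, max_eq_right hx.1]
  have hc_cont : Continuous c := continuous_const.max (continuous_id.min continuous_const)
  set g : ℝ → ℝ := fun x => Real.sqrt (V (c x) - E) with hgdef
  have hg_cont : Continuous g := by
    apply Real.continuous_sqrt.comp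
    apply Continuous.sub _ continuous_const
    exact hVcont.comp_continuous hc_cont (fun x => (hc_mem x).1)
  have hg_eq : ∀ x ∈ Icc (0:ℝ) N, g x = Real.sqrt (V x - E) := by
    intro x hx; simp only [hgdef, hc_id x hx]
  have hg_nonneg : ∀ x, 0 ≤ g x := fun x => Real.sqrt_nonneg _
  have hg_le : ∀ x, g x ≤ Real.sqrt (V 0) := by
    intro x
    apply Real.sqrt_le_sqrt
    have := hVleV0 (c x) (hc_mem x)
    linarith
  have hgN : g N = 0 := by
    rw [hg_eq N ⟨le_of_lt hN0, le_refl N⟩, hVN, sub_self, Real.sqrt_zero]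
  have hg_sq : ∀ x ∈ Icc (0:ℝ) N, g x ^ 2 = V x - E := by
    intro x hx
    rw [hg_eq x hx, Real.sq_sqrt (by linarith [hEleV x hx])]
  have hg_pos : ∀ x ∈ Ico (0:ℝ) N, 0 < g x := by
    intro x hx
    rw [hg_eq x ⟨hx.1, le_of_lt hx.2⟩]
    exact Real.sqrt_pos.mpr (by linarith [hEltV x hx])
  -- Γ = primitive of g
  set Γ : ℝ → ℝ := fun x => ∫ t in (0:ℝ)..x, g t with hΓdef
  have hΓ : ∀ x, HasDerivAt Γ (g x) x := fun x =>
    (hg_cont.integral_hasStrictDerivAt 0 x).hasDerivAt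
  have hΓ0 : Γ 0 = 0 := intervalIntegral.integral_same
  have hΓN : Γ N = ∫ y in (0:ℝ)..N, Real.sqrt (V y - E) := by
    apply intervalIntegral.integral_congr
    intro x hx
    rw [Set.uIcc_of_le (le_of_lt hN0)] at hx
    exact hg_eq x hx
  -- continuity of u, u' on [0, N]
  have huc : ContinuousOn u (Icc (0:ℝ) N) := fun x hx =>
    ((hu x hx.1).continuousAt).continuousWithinAt
  have hu'c : ContinuousOn u' (Icc (0:ℝ) N) := fun x hx =>
    ((hu' x hx.1).continuousAt).continuousWithinAt
  -- u' > 0 on [0, N]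
  have hu'pos : ∀ x ∈ Icc (0:ℝ) N, 0 < u' x := by
    by_contra hcon
    push_neg at hcon
    obtain ⟨x0, hx0, hx0le⟩ := hcon
    set S := Icc (0:ℝ) N ∩ u' ⁻¹' {0} with hSdef
    have hSne : S.Nonempty := by
      have hsub : Icc (0:ℝ) x0 ⊆ Icc 0 N := Icc_subset_Icc le_rfl hx0.2
      have hivt := intermediate_value_Icc' hx0.1 (hu'c.mono hsub)
      have h0mem : (0:ℝ) ∈ Icc (u' x0) (u' 0) := by
        rw [hu'0]; exact ⟨hx0le, zero_le_one⟩
      obtain ⟨z, hz, hz0⟩ := hivt h0mem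
      exact ⟨z, hsub hz, hz0⟩
    have hSclosed : IsClosed S :=
      hu'c.preimage_isClosed_of_isClosed isClosed_Icc isClosed_singleton
    have hSbdd : BddBelow S := ⟨0, fun y hy => hy.1.1⟩
    set t1 := sInf S with ht1def
    have ht1 : t1 ∈ S := hSclosed.csInf_mem hSne hSbdd
    have ht1zero : u' t1 = 0 := ht1.2
    have ht1Icc : t1 ∈ Icc (0:ℝ) N := ht1.1
    have ht1pos : 0 < t1 := by
      rcases eq_or_lt_of_le ht1Icc.1 with h | h
      · exfalso; rw [← h, hu'0] at ht1zero; norm_num at ht1zero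
      · exact h
    have hsub1 : Icc (0:ℝ) t1 ⊆ Icc 0 N := Icc_subset_Icc le_rfl ht1Icc.2
    -- u' > 0 on [0, t1)
    have hpos : ∀ x ∈ Ico (0:ℝ) t1, 0 < u' x := by
      intro x hx
      by_contra hle
      push_neg at hle
      have hxN : x ∈ Icc (0:ℝ) N := ⟨hx.1, le_trans (le_of_lt hx.2) ht1Icc.2⟩
      have hivt := intermediate_value_Icc' hx.1 (hu'c.mono (Icc_subset_Icc le_rfl hxN.2))
      obtain ⟨z, hz, hz0⟩ := hivt ⟨hle, by rw [hu'0]; exact zero_le_one⟩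
      have hzS : z ∈ S := ⟨⟨hz.1, le_trans hz.2 hxN.2⟩, hz0⟩
      have := csInf_le hSbdd hzS
      have : t1 ≤ x := le_trans this hz.2
      linarith [hx.2]
    -- u monotone on [0, t1]
    have hu_mono1 : MonotoneOn u (Icc (0:ℝ) t1) := by
      apply monotoneOn_of_hasDerivWithinAt_nonneg (convex_Icc 0 t1) (huc.mono hsub1)
        (f' := u')
      · intro x hx
        rw [interior_Icc] at hx
        exact (hu x (le_of_lt hx.1)).hasDerivWithinAt
      · intro x hx
        rw [interior_Icc] at hx
        exact le_of_lt (hpos x ⟨le_of_lt hx.1, hx.2⟩)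
    have hu_nn1 : ∀ x ∈ Icc (0:ℝ) t1, 0 ≤ u x := by
      intro x hx
      rw [← hu0]
      exact hu_mono1 (left_mem_Icc.mpr ht1Icc.1) hx hx.1
    have hu'_mono1 : MonotoneOn u' (Icc (0:ℝ) t1) := by
      apply monotoneOn_of_hasDerivWithinAt_nonneg (convex_Icc 0 t1) (hu'c.mono hsub1)
        (f' := fun x => (V x - E) * u x)
      · intro x hx
        rw [interior_Icc] at hx
        exact (hu' x (le_of_lt hx.1)).hasDerivWithinAt
      · intro x hx
        rw [interior_Icc] at hx
        have hxIcc : x ∈ Icc (0:ℝ) t1 := ⟨le_of_lt hx.1, le_of_lt hx.2⟩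
        have h1 : E ≤ V x := hEleV x (hsub1 hxIcc)
        have h2 : 0 ≤ u x := hu_nn1 x hxIcc
        nlinarith
    have hfin : (1:ℝ) ≤ u' t1 := by
      have := hu'_mono1 (left_mem_Icc.mpr ht1Icc.1) (right_mem_Icc.mpr ht1Icc.1) ht1Icc.1
      rwa [hu'0] at this
    rw [ht1zero] at hfin
    norm_num at hfin
  -- u ≥ 0 on [0, N]
  have humono : MonotoneOn u (Icc (0:ℝ) N) := by
    apply monotoneOn_of_hasDerivWithinAt_nonneg (convex_Icc 0 N) huc
    · intro x hx
      rw [interior_Icc] at hx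
      exact (hu x (le_of_lt hx.1)).hasDerivWithinAt
    · intro x hx
      rw [interior_Icc] at hx
      exact le_of_lt (hu'pos x ⟨le_of_lt hx.1, le_of_lt hx.2⟩)
  have hu_nonneg : ∀ x ∈ Icc (0:ℝ) N, 0 ≤ u x := by
    intro x hx
    rw [← hu0]
    exact humono (left_mem_Icc.mpr (le_of_lt hN0)) hx hx.1
  -- φ = u' - g u ≥ exp(-Γ) > 0 on [0,N]
  have hΓcont : Continuous Γ := by
    apply continuous_iff_continuousAt.mpr
    exact fun x => (hΓ x).continuousAt
  have hVd : ∀ x : ℝ, 0 < x → HasDerivAt V (derivWithin V (Set.Ici 0) x) x := by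
    intro x hx
    have hdiff : DifferentiableAt ℝ V x := by
      have h1 : DifferentiableWithinAt ℝ V (Set.Ici 0) x :=
        (hV.differentiableOn one_ne_zero) x (le_of_lt hx)
      exact h1.differentiableAt (Ici_mem_nhds hx)
    rw [derivWithin_of_mem_nhds (Ici_mem_nhds hx)]
    exact hdiff.hasDerivAt
  have hgd : ∀ x ∈ Ioo (0:ℝ) N,
      HasDerivAt g (derivWithin V (Set.Ici 0) x / (2 * g x)) x := by
    intro x hx
    have hVE : E < V x := hEltV x ⟨le_of_lt hx.1, hx.2⟩
    have hsqrt : HasDerivAt (fun y => Real.sqrt (V y - E))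
        (derivWithin V (Set.Ici 0) x / (2 * Real.sqrt (V x - E))) x :=
      HasDerivAt.sqrt ((hVd x hx.1).sub_const E) (by linarith)
    have heq : g =ᶠ[nhds x] fun y => Real.sqrt (V y - E) := by
      filter_upwards [Ioo_mem_nhds hx.1 hx.2] with y hy
      exact hg_eq y ⟨le_of_lt hy.1, le_of_lt hy.2⟩
    have := hsqrt.congr_of_eventuallyEq heq
    rwa [← hg_eq x ⟨le_of_lt hx.1, le_of_lt hx.2⟩] at this
  have hρmono : MonotoneOn (fun x => (u' x - g x * u x) * Real.exp (Γ x)) (Icc (0:ℝ) N) := by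
    apply monotoneOn_of_hasDerivWithinAt_nonneg (convex_Icc 0 N)
      (f' := fun x => -(derivWithin V (Set.Ici 0) x / (2 * g x)) * u x * Real.exp (Γ x))
    · exact ((hu'c.sub (hg_cont.continuousOn.mul huc)).mul
        ((hΓcont.rexp).continuousOn))
    · intro x hx
      rw [interior_Icc] at hx
      have hx' : x ∈ Icc (0:ℝ) N := ⟨le_of_lt hx.1, le_of_lt hx.2⟩
      have hinner : HasDerivAt (fun y => u' y - g y * u y)
          ((V x - E) * u x - (derivWithin V (Set.Ici 0) x / (2 * g x) * u x + g x * u' x)) x :=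
        (hu' x (le_of_lt hx.1)).sub ((hgd x hx).mul (hu x (le_of_lt hx.1)))
      have hexp : HasDerivAt (fun y => Real.exp (Γ y)) (Real.exp (Γ x) * g x) x :=
        (hΓ x).exp
      have htot := hinner.mul hexp
      have hkey : ((V x - E) * u x -
            (derivWithin V (Set.Ici 0) x / (2 * g x) * u x + g x * u' x)) * Real.exp (Γ x)
          + (u' x - g x * u x) * (Real.exp (Γ x) * g x)
          = -(derivWithin V (Set.Ici 0) x / (2 * g x)) * u x * Real.exp (Γ x) := by
        rw [← hg_sq x hx']; ring
      rw [hkey] at htot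
      exact htot.hasDerivWithinAt
    · intro x hx
      rw [interior_Icc] at hx
      have hx' : x ∈ Icc (0:ℝ) N := ⟨le_of_lt hx.1, le_of_lt hx.2⟩
      have h1 : 0 ≤ -(derivWithin V (Set.Ici 0) x / (2 * g x)) := by
        apply neg_nonneg.mpr
        apply div_nonpos_of_nonpos_of_nonneg (le_of_lt (hV' x (le_of_lt hx.1)))
        have := hg_pos x ⟨le_of_lt hx.1, hx.2⟩
        linarith
      exact mul_nonneg (mul_nonneg h1 (hu_nonneg x hx')) (Real.exp_nonneg _)
  have hφpos : ∀ x ∈ Icc (0:ℝ) N, 0 < u' x - g x * u x := by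
    intro x hx
    have h0 : (0:ℝ) ∈ Icc (0:ℝ) N := left_mem_Icc.mpr (le_of_lt hN0)
    have := hρmono h0 hx hx.1
    simp only [hu0, hu'0, hΓ0, mul_zero, sub_zero, Real.exp_zero, mul_one] at this
    have hexp := Real.exp_pos (Γ x)
    nlinarith
  -- q = u' e^{-Γ} antitone
  have hq_anti : AntitoneOn (fun x => u' x * Real.exp (-Γ x)) (Icc (0:ℝ) N) := by
    apply antitoneOn_of_hasDerivWithinAt_nonpos (convex_Icc 0 N)
      (f' := fun x => ((V x - E) * u x) * Real.exp (-Γ x) + u' x * (Real.exp (-Γ x) * -(g x)))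
    · exact hu'c.mul ((hΓcont.neg.rexp).continuousOn)
    · intro x hx
      rw [interior_Icc] at hx
      have hd : HasDerivAt (fun y => Real.exp (-Γ y)) (Real.exp (-Γ x) * -(g x)) x :=
        ((hΓ x).neg).exp
      exact ((hu' x (le_of_lt hx.1)).mul hd).hasDerivWithinAt
    · intro x hx
      rw [interior_Icc] at hx
      have hx' : x ∈ Icc (0:ℝ) N := ⟨le_of_lt hx.1, le_of_lt hx.2⟩
      have hφ := hφpos x hx'
      have hkey : ((V x - E) * u x) * Real.exp (-Γ x) + u' x * (Real.exp (-Γ x) * -(g x))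
          = -(g x * ((u' x - g x * u x) * Real.exp (-Γ x))) := by
        rw [← hg_sq x hx']; ring
      rw [hkey]
      apply neg_nonpos.mpr
      exact mul_nonneg (hg_nonneg x) (mul_nonneg (le_of_lt hφ) (Real.exp_nonneg _))
  have hq_le1 : ∀ x ∈ Icc (0:ℝ) N, u' x * Real.exp (-Γ x) ≤ 1 := by
    intro x hx
    have := hq_anti (left_mem_Icc.mpr (le_of_lt hN0)) hx hx.1
    simpa [hu'0, hΓ0] using this
  have hψd : ∀ x : ℝ, 0 ≤ x → HasDerivAt (fun y => u y * Real.exp (-Γ y))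
      ((u' x - g x * u x) * Real.exp (-Γ x)) x := by
    intro x hx
    have hd : HasDerivAt (fun y => Real.exp (-Γ y)) (Real.exp (-Γ x) * -(g x)) x :=
      ((hΓ x).neg).exp
    have := (hu x hx).mul hd
    exact this.congr_deriv (by ring)
  -- ψ = u e^{-Γ}: bounds at N
  have hψN_ub : u N * Real.exp (-Γ N) ≤ N := by
    have hw : MonotoneOn (fun x => x - u x * Real.exp (-Γ x)) (Icc (0:ℝ) N) := by
      apply monotoneOn_of_hasDerivWithinAt_nonneg (convex_Icc 0 N)
        (f' := fun x => 1 - (u' x - g x * u x) * Real.exp (-Γ x))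
      · exact continuousOn_id.sub (huc.mul ((hΓcont.neg.rexp).continuousOn))
      · intro x hx
        rw [interior_Icc] at hx
        exact ((hasDerivAt_id x).sub (hψd x (le_of_lt hx.1))).hasDerivWithinAt
      · intro x hx
        rw [interior_Icc] at hx
        have hx' : x ∈ Icc (0:ℝ) N := ⟨le_of_lt hx.1, le_of_lt hx.2⟩
        have h1 : (u' x - g x * u x) * Real.exp (-Γ x) ≤ u' x * Real.exp (-Γ x) := by
          apply mul_le_mul_of_nonneg_right _ (Real.exp_nonneg _)
          have := mul_nonneg (hg_nonneg x) (hu_nonneg x hx')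
          linarith
        linarith [hq_le1 x hx']
    have := hw (left_mem_Icc.mpr (le_of_lt hN0)) (right_mem_Icc.mpr (le_of_lt hN0)) (le_of_lt hN0)
    simp only [hu0, hΓ0, zero_mul, mul_zero, sub_zero, neg_zero, Real.exp_zero,
      mul_one, zero_sub, neg_neg] at this
    linarith
  -- h = s ψ + q monotone, so s ψ(N) + q(N) ≥ 1
  have hlow : 1 ≤ Real.sqrt (V 0) * (u N * Real.exp (-Γ N)) + u' N * Real.exp (-Γ N) := by
    have hh : MonotoneOn (fun x => Real.sqrt (V 0) * (u x * Real.exp (-Γ x))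
        + u' x * Real.exp (-Γ x)) (Icc (0:ℝ) N) := by
      apply monotoneOn_of_hasDerivWithinAt_nonneg (convex_Icc 0 N)
        (f' := fun x => Real.sqrt (V 0) * ((u' x - g x * u x) * Real.exp (-Γ x))
            + (((V x - E) * u x) * Real.exp (-Γ x) + u' x * (Real.exp (-Γ x) * -(g x))))
      · exact (continuousOn_const.mul (huc.mul ((hΓcont.neg.rexp).continuousOn))).add
          (hu'c.mul ((hΓcont.neg.rexp).continuousOn))
      · intro x hx
        rw [interior_Icc] at hx
        have hd : HasDerivAt (fun y => Real.exp (-Γ y)) (Real.exp (-Γ x) * -(g x)) x :=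
          ((hΓ x).neg).exp
        exact ((HasDerivAt.const_mul (Real.sqrt (V 0)) (hψd x (le_of_lt hx.1))).add
          ((hu' x (le_of_lt hx.1)).mul hd)).hasDerivWithinAt
      · intro x hx
        rw [interior_Icc] at hx
        have hx' : x ∈ Icc (0:ℝ) N := ⟨le_of_lt hx.1, le_of_lt hx.2⟩
        have hkey : Real.sqrt (V 0) * ((u' x - g x * u x) * Real.exp (-Γ x))
            + (((V x - E) * u x) * Real.exp (-Γ x) + u' x * (Real.exp (-Γ x) * -(g x)))
            = (Real.sqrt (V 0) - g x) * ((u' x - g x * u x) * Real.exp (-Γ x)) := by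
          rw [← hg_sq x hx']; ring
        rw [hkey]
        exact mul_nonneg (sub_nonneg.mpr (hg_le x))
          (mul_nonneg (le_of_lt (hφpos x hx')) (Real.exp_nonneg _))
    have hmono := hh (left_mem_Icc.mpr (le_of_lt hN0)) (right_mem_Icc.mpr (le_of_lt hN0))
      (le_of_lt hN0)
    have h0 : Real.sqrt (V 0) * (u 0 * Real.exp (-Γ 0)) + u' 0 * Real.exp (-Γ 0) = 1 := by
      rw [hu0, hu'0, hΓ0]; norm_num
    simp only [hu0, hu'0, hΓ0, neg_zero, Real.exp_zero, mul_zero, zero_mul, mul_one,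
      one_mul, add_zero, zero_add] at hmono
    exact hmono
  -- final assembly
  set a := u N * Real.exp (-Γ N) with hadef
  set b := u' N * Real.exp (-Γ N) with hbdef
  have ha0 : 0 ≤ a := mul_nonneg (hu_nonneg N ⟨le_of_lt hN0, le_refl N⟩) (Real.exp_nonneg _)
  have hb0 : 0 ≤ b := mul_nonneg (le_of_lt (hu'pos N ⟨le_of_lt hN0, le_refl N⟩)) (Real.exp_nonneg _)
  have hb1 : b ≤ 1 := by
    have := hq_anti (left_mem_Icc.mpr (le_of_lt hN0)) ⟨le_of_lt hN0, le_refl N⟩ (le_of_lt hN0)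
    simpa [hu'0, hΓ0] using this
  have huN : u N = a * Real.exp (Γ N) := by
    rw [hadef, mul_assoc, ← Real.exp_add, neg_add_cancel, Real.exp_zero, mul_one]
  have hu'N : u' N = b * Real.exp (Γ N) := by
    rw [hbdef, mul_assoc, ← Real.exp_add, neg_add_cancel, Real.exp_zero, mul_one]
  have hV00 : 0 < V 0 := lt_trans hE0 hEV0
  have hs_sq : Real.sqrt (V 0) ^ 2 = V 0 := Real.sq_sqrt (le_of_lt hV00)
  have hab_low : Real.exp (-2 * V 0) ≤ a ^ 2 + b ^ 2 := by
    have hcs : 1 ≤ (V 0 + 1) * (a ^ 2 + b ^ 2) := by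
      nlinarith [sq_nonneg (Real.sqrt (V 0) * b - a), hlow, Real.sqrt_nonneg (V 0)]
    have hexp : V 0 + 1 ≤ Real.exp (2 * V 0) := by
      have h1 : V 0 + 1 ≤ Real.exp (V 0) := by linarith [Real.add_one_le_exp (V 0)]
      have h2 : Real.exp (V 0) ≤ Real.exp (2 * V 0) := Real.exp_le_exp.mpr (by linarith)
      linarith
    have hmul : Real.exp (-2 * V 0) * Real.exp (2 * V 0) = 1 := by
      rw [← Real.exp_add]; norm_num
    have h1 : 1 ≤ Real.exp (2 * V 0) * (a ^ 2 + b ^ 2) := by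
      nlinarith [hexp, hcs, sq_nonneg a, sq_nonneg b]
    calc Real.exp (-2 * V 0) = Real.exp (-2 * V 0) * 1 := by ring
      _ ≤ Real.exp (-2 * V 0) * (Real.exp (2 * V 0) * (a ^ 2 + b ^ 2)) :=
          mul_le_mul_of_nonneg_left h1 (Real.exp_nonneg _)
      _ = a ^ 2 + b ^ 2 := by rw [← mul_assoc, hmul, one_mul]
  constructor
  · rw [huN, hu'N, ← hΓN]
    have h2 : Real.exp (2 * Γ N) = Real.exp (Γ N) ^ 2 := by
      rw [← Real.exp_nat_mul]; ring_nf
    calc Real.exp (-2 * V 0) * Real.exp (2 * Γ N)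
        ≤ (a ^ 2 + b ^ 2) * Real.exp (2 * Γ N) := by
          apply mul_le_mul_of_nonneg_right hab_low (Real.exp_nonneg _)
      _ = (a * Real.exp (Γ N)) ^ 2 + (b * Real.exp (Γ N)) ^ 2 := by rw [h2]; ring
  · rw [huN, hu'N, ← hΓN]
    have h2 : Real.exp (2 * Γ N) = Real.exp (Γ N) ^ 2 := by
      rw [← Real.exp_nat_mul]; ring_nf
    have haN : a ≤ N := hψN_ub
    calc (a * Real.exp (Γ N)) ^ 2 + (b * Real.exp (Γ N)) ^ 2
        = (a ^ 2 + b ^ 2) * Real.exp (2 * Γ N) := by rw [h2]; ring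
      _ ≤ (N ^ 2 + 1) * Real.exp (2 * Γ N) := by
          apply mul_le_mul_of_nonneg_right _ (Real.exp_nonneg _)
          nlinarith
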